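/- Let μ be a Borel probability measure on [0,∞) supported in [c, C] with 0 < c ≤ C, let f = ∫ 1/x² dμ(x), and suppose f > 1. Suppose v > 0 satisfies v = η + ∫ v/(x²+v²) dμ(x) with 0 < η ≤ 1 and v ≤ 1 (the case t = 1). Then there exist constants K₁, K₂ > 0 depending only on c, C such that K₁ (√(f−1) + η^{1/3}) ≤ v ≤ K₂ (√(f−1) + η^{1/3}). -/
import Mathlib

open MeasureTheory

private lemma cube_rpow (x : ℝ) (hx : 0 ≤ x) : (x ^ ((1:ℝ)/3)) ^ 3 = x := by
  rw [← Real.rpow_natCast (x ^ ((1:ℝ)/3)) 3, ← Real.rpow_mul hx]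
  norm_num

private lemma alg_lemma (a b η v s : ℝ) (hapos : 0 < a) (hbpos : 0 < b)
    (hη : 0 < η) (hv : 0 < v) (hs : 0 ≤ s) (I2 : ℝ) (hI2a : a ≤ I2) (hI2b : I2 ≤ b)
    (key : η + s ^ 2 * v = v ^ 3 * I2) :
    min (1 / Real.sqrt b) ((1/b) ^ ((1:ℝ)/3)) / 2 * (s + η ^ ((1:ℝ)/3)) ≤ v ∧
    v ≤ max (Real.sqrt (2/a)) ((2/a) ^ ((1:ℝ)/3)) * (s + η ^ ((1:ℝ)/3)) := by
  have hv3 : (0:ℝ) ≤ v ^ 3 := by positivity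
  have hub : η + s ^ 2 * v ≤ v ^ 3 * b := by
    rw [key]; exact mul_le_mul_of_nonneg_left hI2b hv3
  have hlb : v ^ 3 * a ≤ η + s ^ 2 * v := by
    rw [key]; exact mul_le_mul_of_nonneg_left hI2a hv3
  have hη3 : (0:ℝ) ≤ η ^ ((1:ℝ)/3) := Real.rpow_nonneg hη.le _
  constructor
  · -- lower bound
    have L1 : η ^ ((1:ℝ)/3) * (1/b) ^ ((1:ℝ)/3) ≤ v := by
      have h3 : (η ^ ((1:ℝ)/3) * (1/b) ^ ((1:ℝ)/3)) ^ 3 ≤ v ^ 3 := by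
        rw [mul_pow, cube_rpow _ hη.le, cube_rpow _ (by positivity : (0:ℝ) ≤ 1/b)]
        rw [mul_one_div, div_le_iff₀ hbpos]
        nlinarith [mul_nonneg (sq_nonneg s) hv.le]
      exact le_of_pow_le_pow_left₀ (by norm_num) hv.le h3
    have hs2v : s ^ 2 ≤ v ^ 2 * b := by
      nlinarith [hv, hη.le]
    have L2 : 1 / Real.sqrt b * s ≤ v := by
      rw [one_div, inv_mul_le_iff₀ (Real.sqrt_pos.mpr hbpos)]
      have h1 : s = Real.sqrt (s ^ 2) := (Real.sqrt_sq hs).symm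
      rw [h1]
      calc Real.sqrt (s ^ 2) ≤ Real.sqrt (v ^ 2 * b) := Real.sqrt_le_sqrt hs2v
        _ = Real.sqrt b * v := by
            rw [Real.sqrt_mul (sq_nonneg v), Real.sqrt_sq hv.le]; ring
    have hm1 : min (1 / Real.sqrt b) ((1/b) ^ ((1:ℝ)/3)) ≤ 1 / Real.sqrt b :=
      min_le_left _ _
    have hm2 : min (1 / Real.sqrt b) ((1/b) ^ ((1:ℝ)/3)) ≤ (1/b) ^ ((1:ℝ)/3) :=
      min_le_right _ _
    nlinarith [mul_le_mul_of_nonneg_right hm1 hs, mul_le_mul_of_nonneg_right hm2 hη3,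
      L1, L2]
  · -- upper bound
    have hmax1 : Real.sqrt (2/a) ≤ max (Real.sqrt (2/a)) ((2/a) ^ ((1:ℝ)/3)) :=
      le_max_left _ _
    have hmax2 : (2/a) ^ ((1:ℝ)/3) ≤ max (Real.sqrt (2/a)) ((2/a) ^ ((1:ℝ)/3)) :=
      le_max_right _ _
    have hmaxnn : (0:ℝ) ≤ max (Real.sqrt (2/a)) ((2/a) ^ ((1:ℝ)/3)) :=
      le_trans (Real.sqrt_nonneg _) hmax1
    by_cases hcase : v ^ 3 * a ≤ 2 * η
    · have U1 : v ≤ (2/a) ^ ((1:ℝ)/3) * η ^ ((1:ℝ)/3) := by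
        have h3 : v ^ 3 ≤ ((2/a) ^ ((1:ℝ)/3) * η ^ ((1:ℝ)/3)) ^ 3 := by
          rw [mul_pow, cube_rpow _ (by positivity : (0:ℝ) ≤ 2/a), cube_rpow _ hη.le]
          rw [div_mul_eq_mul_div, le_div_iff₀ hapos]
          linarith
        exact le_of_pow_le_pow_left₀ (by norm_num)
          (by positivity) h3
      nlinarith [mul_le_mul_of_nonneg_right hmax2 hη3, mul_nonneg hmaxnn hs]
    · push_neg at hcase
      have hv2 : v ^ 2 * a ≤ 2 * s ^ 2 := by
        nlinarith [hv, hlb, hcase]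
      have U2 : v ≤ Real.sqrt (2/a) * s := by
        have h1 : v ^ 2 ≤ (2/a) * s ^ 2 := by
          rw [div_mul_eq_mul_div, le_div_iff₀ hapos]; linarith
        calc v = Real.sqrt (v ^ 2) := (Real.sqrt_sq hv.le).symm
          _ ≤ Real.sqrt ((2/a) * s ^ 2) := Real.sqrt_le_sqrt h1
          _ = Real.sqrt (2/a) * s := by
              rw [Real.sqrt_mul (by positivity), Real.sqrt_sq hs]
      nlinarith [mul_le_mul_of_nonneg_right hmax1 hs, mul_nonneg hmaxnn hη3]

set_option maxHeartbeats 1000000 in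
theorem stmt_9 (c C : ℝ) (hc : 0 < c) (hcC : c ≤ C) :
    ∃ K₁ K₂ : ℝ, 0 < K₁ ∧ 0 < K₂ ∧
      ∀ (μ : Measure ℝ), IsProbabilityMeasure μ → μ (Set.Icc c C)ᶜ = 0 →
        ∀ η v : ℝ, 0 < η → η ≤ 1 → 0 < v → v ≤ 1 →
          1 < (∫ x, 1 / x ^ 2 ∂μ) →
          v = η + ∫ x, v / (x ^ 2 + v ^ 2) ∂μ →
          K₁ * (Real.sqrt ((∫ x, 1 / x ^ 2 ∂μ) - 1) + η ^ ((1 : ℝ) / 3)) ≤ v ∧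
          v ≤ K₂ * (Real.sqrt ((∫ x, 1 / x ^ 2 ∂μ) - 1) + η ^ ((1 : ℝ) / 3)) := by
  have hC : 0 < C := hc.trans_le hcC
  set b : ℝ := 1 / c ^ 4 with hbdef
  set a : ℝ := 1 / (C ^ 2 * (C ^ 2 + 1)) with hadef
  have hbpos : 0 < b := by positivity
  have hapos : 0 < a := by positivity
  refine ⟨min (1 / Real.sqrt b) ((1/b) ^ ((1:ℝ)/3)) / 2,
          max (Real.sqrt (2/a)) ((2/a) ^ ((1:ℝ)/3)), ?_, ?_, ?_⟩
  · have h1 : 0 < 1 / Real.sqrt b := by positivity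
    have h2 : (0:ℝ) < (1/b) ^ ((1:ℝ)/3) := Real.rpow_pos_of_pos (by positivity) _
    have := lt_min h1 h2
    linarith
  · exact lt_of_lt_of_le (Real.sqrt_pos.mpr (by positivity)) (le_max_left _ _)
  intro μ hprob hsupp η v hη hη1 hv hv1 hf heq
  haveI := hprob
  have hμae : ∀ᵐ x ∂μ, x ∈ Set.Icc c C := by
    rw [ae_iff]
    exact hsupp
  -- measurability
  have hx2m : Measurable fun x : ℝ => x ^ 2 := measurable_id.pow_const 2
  have m1 : AEStronglyMeasurable (fun x : ℝ => 1 / x ^ 2) μ :=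
    (measurable_const.div hx2m).aestronglyMeasurable
  have m2 : AEStronglyMeasurable (fun x : ℝ => 1 / (x ^ 2 + v ^ 2)) μ :=
    (measurable_const.div (hx2m.add_const _)).aestronglyMeasurable
  have m3 : AEStronglyMeasurable (fun x : ℝ => 1 / (x ^ 2 * (x ^ 2 + v ^ 2))) μ :=
    (measurable_const.div (hx2m.mul (hx2m.add_const _))).aestronglyMeasurable
  -- integrability
  have h1 : Integrable (fun x : ℝ => 1 / x ^ 2) μ := by
    apply Integrable.mono' (integrable_const (1 / c ^ 2)) m1
    filter_upwards [hμae] with x hx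
    have hx0 : 0 < x := lt_of_lt_of_le hc hx.1
    rw [Real.norm_eq_abs, abs_of_nonneg (by positivity)]
    exact one_div_le_one_div_of_le (by positivity) (by nlinarith [hx.1])
  have h2 : Integrable (fun x : ℝ => 1 / (x ^ 2 + v ^ 2)) μ := by
    apply Integrable.mono' (integrable_const (1 / v ^ 2)) m2
    filter_upwards with x
    rw [Real.norm_eq_abs, abs_of_nonneg (by positivity)]
    exact one_div_le_one_div_of_le (by positivity) (by nlinarith [sq_nonneg x])
  have h3 : Integrable (fun x : ℝ => 1 / (x ^ 2 * (x ^ 2 + v ^ 2))) μ := by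
    apply Integrable.mono' (integrable_const b) m3
    filter_upwards [hμae] with x hx
    have hx0 : 0 < x := lt_of_lt_of_le hc hx.1
    rw [Real.norm_eq_abs, abs_of_nonneg (by positivity), hbdef]
    have hcx : c ^ 2 ≤ x ^ 2 := by nlinarith [hx.1, hc.le]
    apply one_div_le_one_div_of_le (by positivity)
    nlinarith [hcx, mul_le_mul hcx hcx (by positivity : (0:ℝ) ≤ c ^ 2) (sq_nonneg x),
      mul_nonneg (sq_nonneg x) (sq_nonneg v)]
  obtain ⟨f, hfdef⟩ : ∃ r, r = ∫ x, 1 / x ^ 2 ∂μ := ⟨_, rfl⟩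
  obtain ⟨I1, hI1def⟩ : ∃ r, r = ∫ x, 1 / (x ^ 2 + v ^ 2) ∂μ := ⟨_, rfl⟩
  obtain ⟨I2, hI2def⟩ : ∃ r, r = ∫ x, 1 / (x ^ 2 * (x ^ 2 + v ^ 2)) ∂μ := ⟨_, rfl⟩
  rw [← hfdef] at hf ⊢
  have e1 : (∫ x, v / (x ^ 2 + v ^ 2) ∂μ) = v * I1 := by
    rw [hI1def, ← integral_const_mul]
    exact integral_congr_ae (Filter.Eventually.of_forall fun x => by ring)
  have e2 : (∫ x, (1 / x ^ 2 - 1 / (x ^ 2 + v ^ 2)) ∂μ) = v ^ 2 * I2 := by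
    rw [hI2def, ← integral_const_mul]
    apply integral_congr_ae
    filter_upwards [hμae] with x hx
    have hx0 : x ≠ 0 := (lt_of_lt_of_le hc hx.1).ne'
    have hd : x ^ 2 + v ^ 2 ≠ 0 := by positivity
    field_simp
    try ring
  have e3 : f - I1 = v ^ 2 * I2 := by
    rw [hfdef, hI1def, ← integral_sub h1 h2]; exact e2
  have e4 : v = η + v * I1 := heq.trans (by rw [e1])
  have key : η + (f - 1) * v = v ^ 3 * I2 := by
    have h5 : v * (f - I1) = v * (v ^ 2 * I2) := by rw [e3]
    have h6 : v * I1 = v - η := by linarith [e4]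
    linear_combination h5 + h6
  -- bounds on I2
  have hI2b : I2 ≤ b := by
    have hmono : I2 ≤ ∫ _x, b ∂μ := by
      rw [hI2def]
      apply integral_mono_ae h3 (integrable_const b)
      filter_upwards [hμae] with x hx
      have hx0 : 0 < x := lt_of_lt_of_le hc hx.1
      rw [hbdef]
      have hcx : c ^ 2 ≤ x ^ 2 := by nlinarith [hx.1, hc.le]
      apply one_div_le_one_div_of_le (by positivity)
      nlinarith [hcx, mul_le_mul hcx hcx (by positivity : (0:ℝ) ≤ c ^ 2) (sq_nonneg x),
        mul_nonneg (sq_nonneg x) (sq_nonneg v)]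
    simpa [measure_univ] using hmono
  have hI2a : a ≤ I2 := by
    have hmono : (∫ _x, a ∂μ) ≤ I2 := by
      rw [hI2def]
      apply integral_mono_ae (integrable_const a) h3
      filter_upwards [hμae] with x hx
      have hx0 : 0 < x := lt_of_lt_of_le hc hx.1
      rw [hadef]
      apply one_div_le_one_div_of_le (by positivity)
      have hxC : x ^ 2 ≤ C ^ 2 := by nlinarith [hx.2, hx0.le]
      have hv2 : v ^ 2 ≤ 1 := by nlinarith [hv.le, hv1]
      have := mul_le_mul hxC (by linarith : x ^ 2 + v ^ 2 ≤ C ^ 2 + 1)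
        (by positivity) (by positivity : (0:ℝ) ≤ C ^ 2)
      linarith
    simpa [measure_univ] using hmono
  set s := Real.sqrt (f - 1) with hsdef
  have hs2 : s ^ 2 = f - 1 := Real.sq_sqrt (by linarith)
  have key' : η + s ^ 2 * v = v ^ 3 * I2 := by rw [hs2]; linarith [key]
  exact alg_lemma a b η v s hapos hbpos hη hv (Real.sqrt_nonneg _) I2 hI2a hI2b key'
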